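/- Strict decrease of the Lyapunov function: assume β v > 0 and β v > ρ · k v for every player v. Let x : ℝ → (Fin N → ℝ) be a trajectory such that at time t every component satisfies x t v ∈ (0,1], x t ≠ 𝟙, and each component function s ↦ x s v has derivative F (x t) v at t. Then s ↦ V (x s) is differentiable at t with strictly negative derivative. -/

import Mathlib

/-- Strict decrease of the Lyapunov function: if `β v > 0` and `β v > ρ * k v` for
every player, and at time `t` a trajectory satisfies `x t v ∈ (0,1]` for all `v`,
`x t ≠ 𝟙`, and solves the SR-EGN equation componentwise, then `s ↦ V (x s)` is
differentiable at `t` with strictly negative derivative. -/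
theorem lyapunov_strict_decrease
    (N : ℕ) (hN : 1 ≤ N)
    (A : Fin N → Fin N → ℝ)
    (hA01 : ∀ v w, A v w = 0 ∨ A v w = 1)
    (hAdiag : ∀ v, A v v = 0)
    (σC σD : ℝ) (hσC : σC < 0) (hσD : 0 < σD)
    (β : Fin N → ℝ)
    (k : Fin N → ℝ) (hk : ∀ v, k v = ∑ w, A v w)
    (G : Fin N → (Fin N → ℝ) → ℝ)
    (hG : ∀ v x, G v x = ∑ w, A v w * ((σC + σD) * x w - σD))
    (f : ℝ → ℝ) (hf : ∀ y, f y = (σC + σD) * y - σD)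
    (F : (Fin N → ℝ) → (Fin N → ℝ))
    (hF : ∀ x v, F x v = x v * (1 - x v) * (G v x - β v * f (x v)))
    (ψ ξ ρ : ℝ) (hψ : ψ = min σC (-σD)) (hξ : ξ = max σC (-σD)) (hρ : ρ = ψ / ξ)
    (V : (Fin N → ℝ) → ℝ)
    (hV : ∀ x, V x = -∑ v, Real.log (x v))
    (hβpos : ∀ v, 0 < β v) (hβ : ∀ v, β v > ρ * k v)
    (x : ℝ → (Fin N → ℝ)) (t : ℝ)
    (hmem : ∀ v, x t v ∈ Set.Ioc (0 : ℝ) 1)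
    (hne : x t ≠ fun _ => 1)
    (hode : ∀ v, HasDerivAt (fun s => x s v) (F (x t) v) t) :
    ∃ d : ℝ, HasDerivAt (fun s => V (x s)) d t ∧ d < 0 := by
  have hξneg : ξ < 0 := by rw [hξ]; exact max_lt hσC (by linarith)
  have hψξ : ψ ≤ ξ := by rw [hψ, hξ]; exact min_le_max
  -- bounds on f
  have hfb : ∀ v, ψ ≤ f (x t v) ∧ f (x t v) ≤ ξ := by
    intro v
    obtain ⟨h0, h1⟩ := hmem v
    have hfy : f (x t v) = x t v * σC + (1 - x t v) * (-σD) := by rw [hf]; ring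
    constructor
    · have h2 : ψ ≤ σC := by rw [hψ]; exact min_le_left _ _
      have h3 : ψ ≤ -σD := by rw [hψ]; exact min_le_right _ _
      nlinarith
    · have h2 : σC ≤ ξ := by rw [hξ]; exact le_max_left _ _
      have h3 : -σD ≤ ξ := by rw [hξ]; exact le_max_right _ _
      nlinarith
  -- positivity of the bracket
  have hkey : ∀ v, 0 < G v (x t) - β v * f (x t v) := by
    intro v
    have hknn : 0 ≤ k v := by
      rw [hk]
      apply Finset.sum_nonneg
      intro w _
      rcases hA01 v w with h | h <;> simp [h]
    have hG1 : ψ * k v ≤ G v (x t) := by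
      rw [hG, hk, Finset.mul_sum]
      apply Finset.sum_le_sum
      intro w _
      rcases hA01 v w with h | h
      · simp [h]
      · have h1 := (hfb w).1
        rw [hf] at h1
        simp [h]
        linarith
    have hβf : β v * f (x t v) ≤ β v * ξ :=
      mul_le_mul_of_nonneg_left (hfb v).2 (hβpos v).le
    have hρk : β v * ξ < ψ * k v := by
      have h1 : β v * ξ < ρ * k v * ξ :=
        (mul_lt_mul_right_of_neg hξneg).mpr (hβ v)
      have h2 : ρ * k v * ξ = ψ * k v := by
        rw [hρ]; field_simp
        rw [mul_right_comm, mul_div_cancel_right₀ _ hξneg.ne]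
      linarith
    linarith
  -- the derivative
  have hxne : ∀ v, x t v ≠ 0 := fun v => (ne_of_gt (hmem v).1)
  have hder : HasDerivAt (fun s => V (x s)) (-∑ v, F (x t) v / x t v) t := by
    have h1 : HasDerivAt (fun s => ∑ v, Real.log (x s v))
        (∑ v, F (x t) v / x t v) t := by
      apply HasDerivAt.fun_sum
      intro v _
      exact (hode v).log (hxne v)
    have h2 := h1.fun_neg
    simpa [hV] using h2
  refine ⟨_, hder, ?_⟩
  have hterm : ∀ v, F (x t) v / x t v = (1 - x t v) * (G v (x t) - β v * f (x t v)) := by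
    intro v
    rw [hF]
    field_simp [hxne v]
  have hsum : 0 < ∑ v, F (x t) v / x t v := by
    apply Finset.sum_pos'
    · intro v _
      rw [hterm v]
      exact mul_nonneg (by linarith [(hmem v).2]) (hkey v).le
    · obtain ⟨v0, hv0⟩ := Function.ne_iff.mp hne
      refine ⟨v0, Finset.mem_univ v0, ?_⟩
      rw [hterm v0]
      have h1 : x t v0 < 1 := lt_of_le_of_ne (hmem v0).2 hv0
      exact mul_pos (by linarith) (hkey v0)
  linarith
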